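/- Let 2 ≤ q < ∞ and let (X,‖·‖) be a Banach space which is uniformly convex of power type q with constant δ ∈ (0,1], and let (Ω,μ) be a measure space. Then the Bochner space L_q(Ω;X) is uniformly convex of power type q with the same constant δ, i.e., ‖(f+g)/2‖_{L_q(Ω;X)}^q + δ‖(f−g)/2‖_{L_q(Ω;X)}^q ≤ (‖f‖_{L_q(Ω;X)}^q + ‖g‖_{L_q(Ω;X)}^q)/2 for all f, g ∈ L_q(Ω;X). -/

import Mathlib

open MeasureTheory

/-- A normed space is uniformly convex of power type `q` with constant `δ` if
`‖(x+y)/2‖^q + δ ‖(x-y)/2‖^q ≤ (‖x‖^q + ‖y‖^q)/2` for all `x, y`. -/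
def UniformlyConvexPow (X : Type*) [NormedAddCommGroup X] [NormedSpace ℝ X]
    (q δ : ℝ) : Prop :=
  ∀ x y : X, ‖(2 : ℝ)⁻¹ • (x + y)‖ ^ q + δ * ‖(2 : ℝ)⁻¹ • (x - y)‖ ^ q ≤
    (‖x‖ ^ q + ‖y‖ ^ q) / 2

/-- If `X` is uniformly convex of power type `q` (`2 ≤ q < ∞`) with constant
`δ ∈ (0,1]`, then so is the Bochner space `L_q(Ω; X)`, with the same constant. -/
theorem stmt7 (X : Type*) [NormedAddCommGroup X] [NormedSpace ℝ X] [CompleteSpace X]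
    (q δ : ℝ) (hq : 2 ≤ q) (hδ : δ ∈ Set.Ioc (0 : ℝ) 1)
    (hX : UniformlyConvexPow X q δ)
    (Ω : Type*) [MeasurableSpace Ω] (μ : Measure Ω)
    [Fact (1 ≤ ENNReal.ofReal q)] :
    UniformlyConvexPow (Lp X (ENNReal.ofReal q) μ) q δ := by
  have hq0 : (0:ℝ) < q := by linarith
  set p := ENNReal.ofReal q with hp
  have hp0 : p ≠ 0 := by
    simp only [hp, ne_eq, ENNReal.ofReal_eq_zero, not_le]; linarith
  have hpt : p ≠ ⊤ := ENNReal.ofReal_ne_top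
  have hpr : p.toReal = q := ENNReal.toReal_ofReal hq0.le
  have key : ∀ h : Lp X p μ, ‖h‖ ^ q = ∫ ω, ‖h ω‖ ^ q ∂μ := by
    intro h
    have h1 := (Lp.memLp h).eLpNorm_eq_integral_rpow_norm hp0 hpt
    rw [hpr] at h1
    have hnn : 0 ≤ ∫ ω, ‖h ω‖ ^ q ∂μ :=
      integral_nonneg fun ω => Real.rpow_nonneg (norm_nonneg _) q
    rw [Lp.norm_def, h1, ENNReal.toReal_ofReal (Real.rpow_nonneg hnn _),
      ← Real.rpow_mul hnn, inv_mul_cancel₀ hq0.ne', Real.rpow_one]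
  have hint : ∀ h : Lp X p μ, Integrable (fun ω => ‖h ω‖ ^ q) μ := by
    intro h
    have := (Lp.memLp h).integrable_norm_rpow hp0 hpt
    rwa [hpr] at this
  intro f g
  rw [key, key, key, key]
  have hae : ∀ᵐ ω ∂μ, ‖((2:ℝ)⁻¹ • (f + g) : Lp X p μ) ω‖ ^ q
      + δ * ‖((2:ℝ)⁻¹ • (f - g) : Lp X p μ) ω‖ ^ q
      ≤ (‖f ω‖ ^ q + ‖g ω‖ ^ q) / 2 := by
    filter_upwards [Lp.coeFn_smul (2:ℝ)⁻¹ (f + g), Lp.coeFn_smul (2:ℝ)⁻¹ (f - g),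
      Lp.coeFn_add f g, Lp.coeFn_sub f g] with ω h1 h2 h3 h4
    rw [h1, h2, Pi.smul_apply, Pi.smul_apply, h3, h4, Pi.add_apply, Pi.sub_apply]
    exact hX (f ω) (g ω)
  calc ∫ ω, ‖((2:ℝ)⁻¹ • (f + g) : Lp X p μ) ω‖ ^ q ∂μ
      + δ * ∫ ω, ‖((2:ℝ)⁻¹ • (f - g) : Lp X p μ) ω‖ ^ q ∂μ
      = ∫ ω, (‖((2:ℝ)⁻¹ • (f + g) : Lp X p μ) ω‖ ^ q
        + δ * ‖((2:ℝ)⁻¹ • (f - g) : Lp X p μ) ω‖ ^ q) ∂μ := by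
        rw [integral_add (hint _) ((hint _).const_mul δ), integral_const_mul]
    _ ≤ ∫ ω, (‖f ω‖ ^ q + ‖g ω‖ ^ q) / 2 ∂μ := by
        refine integral_mono_ae ((hint _).add ((hint _).const_mul δ)) ?_ hae
        exact ((hint f).add (hint g)).div_const 2
    _ = (∫ ω, ‖f ω‖ ^ q ∂μ + ∫ ω, ‖g ω‖ ^ q ∂μ) / 2 := by
        rw [integral_div, integral_add (hint f) (hint g)]
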